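/- Let R be an integrally closed domain, f ∈ R nonzero, and S = R[u,v]/(uv - f). If φ ∈ Frac(S) satisfies φ = g/u^d = h/v^d for some d ≥ 0, g ∈ R[u] (viewed in S), and h ∈ R[v] (viewed in S), then φ ∈ S. -/

import Mathlib

set_option synthInstance.maxHeartbeats 1000000
set_option maxHeartbeats 1000000

open MvPolynomial

/-- The suspension ring `S = R[u,v]/(uv - f)`. -/
abbrev Susp (R : Type*) [CommRing R] (f : R) : Type _ :=
  MvPolynomial (Fin 2) R ⧸
    Ideal.span {(X 0 * X 1 - C f : MvPolynomial (Fin 2) R)}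

/-- The image of the variable `u` in `S`. -/
noncomputable abbrev suspU (R : Type*) [CommRing R] (f : R) : Susp R f :=
  Ideal.Quotient.mk _ (X 0)

/-- The image of the variable `v` in `S`. -/
noncomputable abbrev suspV (R : Type*) [CommRing R] (f : R) : Susp R f :=
  Ideal.Quotient.mk _ (X 1)

section SuspAux

open LaurentPolynomial Polynomial

variable {R : Type*} [CommRing R]

private lemma Susp.aeval_T_one (b : R[X]) :
    Polynomial.aeval (T 1 : R[T;T⁻¹]) b = Polynomial.toLaurent b := by
  have : (Polynomial.aeval (T 1 : R[T;T⁻¹]) : R[X] →ₐ[R] R[T;T⁻¹]) = Polynomial.toLaurentAlg := by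
    apply Polynomial.algHom_ext
    simp [Polynomial.toLaurentAlg_apply]
  rw [this, Polynomial.toLaurentAlg_apply]

private lemma Susp.ev_coeff (f : R) (a : R[X]) (m : ℤ) :
    (Polynomial.aeval (LaurentPolynomial.C f * T (-1)) a : R[T;T⁻¹]).coeff m
      = if m ≤ 0 then a.coeff (-m).toNat * f ^ (-m).toNat else 0 := by
  induction a using Polynomial.induction_on' with
  | add p q hp hq =>
      rw [map_add, AddMonoidAlgebra.coeff_add, Finsupp.add_apply, hp, hq, Polynomial.coeff_add]
      split_ifs <;> ring
  | monomial n r =>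
      rw [Polynomial.aeval_monomial, mul_pow, ← map_pow, T_pow]
      rw [show (algebraMap R R[T;T⁻¹]) r = LaurentPolynomial.C r from rfl]
      rw [← mul_assoc, ← map_mul, ← single_eq_C_mul_T, AddMonoidAlgebra.coeff_single,
        Finsupp.single_apply,
        Polynomial.coeff_monomial]
      split_ifs <;> first | omega | (rw [show (-m).toNat = n by omega]) | ring

private lemma Susp.toLaurent_coeff (b : R[X]) (m : ℤ) :
    (Polynomial.toLaurent b).coeff m = if 0 ≤ m then b.coeff m.toNat else 0 := by
  induction b using Polynomial.induction_on' with
  | add p q hp hq =>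
      rw [map_add, AddMonoidAlgebra.coeff_add, Finsupp.add_apply, hp, hq, Polynomial.coeff_add]
      split_ifs <;> ring
  | monomial n r =>
      rw [Polynomial.toLaurent_C_mul_T, ← single_eq_C_mul_T, AddMonoidAlgebra.coeff_single,
        Finsupp.single_apply,
        Polynomial.coeff_monomial]
      split_ifs <;> first | rfl | omega

private lemma Susp.mulT_apply (p : R[T;T⁻¹]) (x y : ℤ) :
    (p * T x : R[T;T⁻¹]).coeff y = p.coeff (y - x) := by
  rw [show (T x : R[T;T⁻¹]) = AddMonoidAlgebra.single x 1 from rfl,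
    AddMonoidAlgebra.coeff_mul_single_apply, mul_one, sub_eq_add_neg]

private lemma Susp.Cmul_apply (p : R[T;T⁻¹]) (r : R) (x : ℤ) :
    (LaurentPolynomial.C r * p : R[T;T⁻¹]).coeff x = r * p.coeff x := by
  rw [show (LaurentPolynomial.C r : R[T;T⁻¹]) = AddMonoidAlgebra.single 0 r from rfl,
    AddMonoidAlgebra.coeff_single_zero_mul]

private lemma Susp.divX_iterate_coeff (P : R[X]) (k n : ℕ) :
    (Polynomial.divX^[k] P).coeff n = P.coeff (n + k) := by
  induction k generalizing P n with
  | zero => simp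
  | succ k ih =>
      rw [Function.iterate_succ_apply, ih, Polynomial.coeff_divX]
      congr 1

/-- The evaluation map `R[u,v] → R[T,T⁻¹]`, `u ↦ f·T⁻¹`, `v ↦ T`. -/
noncomputable def Susp.pi (f : R) : MvPolynomial (Fin 2) R →ₐ[R] R[T;T⁻¹] :=
  MvPolynomial.aeval ![LaurentPolynomial.C f * T (-1), T 1]

private lemma Susp.pi_X0 (f : R) : Susp.pi f (X 0) = LaurentPolynomial.C f * T (-1) := by
  simp [Susp.pi]

private lemma Susp.pi_X1 (f : R) : Susp.pi f (X 1) = T 1 := by simp [Susp.pi]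

private lemma Susp.pi_rel (f : R) : Susp.pi f (X 0 * X 1 - MvPolynomial.C f) = 0 := by
  rw [map_sub, map_mul, Susp.pi_X0, Susp.pi_X1, algHom_C, mul_assoc, ← T_add]
  norm_num

private lemma Susp.pi_aeval0 (f : R) (a : R[X]) :
    Susp.pi f (Polynomial.aeval (X 0) a)
      = Polynomial.aeval (LaurentPolynomial.C f * T (-1)) a := by
  rw [← Polynomial.aeval_algHom_apply, Susp.pi_X0]

private lemma Susp.pi_aeval1 (f : R) (b : R[X]) :
    Susp.pi f (Polynomial.aeval (X 1) b) = Polynomial.toLaurent b := by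
  rw [← Polynomial.aeval_algHom_apply, Susp.pi_X1, Susp.aeval_T_one]

private lemma Susp.nf_exists (f : R) (p : MvPolynomial (Fin 2) R) :
    ∃ a b : R[X], p - (Polynomial.aeval (X 0) a + Polynomial.aeval (X 1) b)
      ∈ Ideal.span {(X 0 * X 1 - MvPolynomial.C f : MvPolynomial (Fin 2) R)} := by
  induction p using MvPolynomial.induction_on with
  | C r =>
      exact ⟨Polynomial.C r, 0, by simp⟩
  | add p q hp hq =>
      obtain ⟨a1, b1, h1⟩ := hp
      obtain ⟨a2, b2, h2⟩ := hq
      refine ⟨a1 + a2, b1 + b2, ?_⟩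
      have := Ideal.add_mem _ h1 h2
      convert this using 1
      rw [map_add, map_add]
      ring
  | mul_X p i hp =>
      obtain ⟨a, b, hab⟩ := hp
      have key : ∀ q r : MvPolynomial (Fin 2) R,
          (q - r ∈ Ideal.span {(X 0 * X 1 - MvPolynomial.C f : MvPolynomial (Fin 2) R)}) →
          ∀ s, q * s - r * s
            ∈ Ideal.span {(X 0 * X 1 - MvPolynomial.C f : MvPolynomial (Fin 2) R)} := by
        intro q r h s
        have := Ideal.mul_mem_right s _ h
        rwa [sub_mul] at this
      have hX1X0 : ∀ c : MvPolynomial (Fin 2) R,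
          c * (X 1 * X 0 - MvPolynomial.C f)
            ∈ Ideal.span {(X 0 * X 1 - MvPolynomial.C f : MvPolynomial (Fin 2) R)} := by
        intro c
        rw [Ideal.mem_span_singleton]
        exact ⟨c, by ring⟩
      have hbdec : Polynomial.aeval (X 1 : MvPolynomial (Fin 2) R) b
          = Polynomial.aeval (X 1 : MvPolynomial (Fin 2) R) (Polynomial.divX b) * X 1
            + MvPolynomial.C (b.coeff 0) := by
        conv_lhs => rw [← Polynomial.divX_mul_X_add b]
        rw [map_add, map_mul, Polynomial.aeval_X, Polynomial.aeval_C,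
          MvPolynomial.algebraMap_eq]
      have hadec : Polynomial.aeval (X 0 : MvPolynomial (Fin 2) R) a
          = Polynomial.aeval (X 0 : MvPolynomial (Fin 2) R) (Polynomial.divX a) * X 0
            + MvPolynomial.C (a.coeff 0) := by
        conv_lhs => rw [← Polynomial.divX_mul_X_add a]
        rw [map_add, map_mul, Polynomial.aeval_X, Polynomial.aeval_C,
          MvPolynomial.algebraMap_eq]
      fin_cases i
      · refine ⟨a * Polynomial.X + Polynomial.C (b.coeff 0) * Polynomial.X,
          Polynomial.C f * Polynomial.divX b, ?_⟩
        have h1 := key _ _ hab (X 0)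
        have h2 := hX1X0 (Polynomial.aeval (X 1 : MvPolynomial (Fin 2) R) (Polynomial.divX b))
        have := Ideal.add_mem _ h1 h2
        convert this using 1
        rw [hbdec]
        simp only [map_add, map_mul, Polynomial.aeval_X, Polynomial.aeval_C,
          MvPolynomial.algebraMap_eq]
        ring_nf
        rfl
      · refine ⟨Polynomial.C f * Polynomial.divX a,
          b * Polynomial.X + Polynomial.C (a.coeff 0) * Polynomial.X, ?_⟩
        have h1 := key _ _ hab (X 1)
        have h2 := hX1X0 (Polynomial.aeval (X 0 : MvPolynomial (Fin 2) R) (Polynomial.divX a))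
        have := Ideal.add_mem _ h1 h2
        convert this using 1
        rw [hadec]
        simp only [map_add, map_mul, Polynomial.aeval_X, Polynomial.aeval_C,
          MvPolynomial.algebraMap_eq]
        ring_nf
        rfl

private lemma Susp.nf_inj [IsDomain R] {f : R} (hf : f ≠ 0) (a b : R[X])
    (h : Susp.pi f (Polynomial.aeval (X 0) a + Polynomial.aeval (X 1) b) = 0) :
    Polynomial.aeval (X 0 : MvPolynomial (Fin 2) R) a + Polynomial.aeval (X 1) b = 0 := by
  rw [map_add, Susp.pi_aeval0, Susp.pi_aeval1] at h
  have hm : ∀ m : ℤ,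
      (Polynomial.aeval (LaurentPolynomial.C f * T (-1)) a : R[T;T⁻¹]).coeff m
        + (Polynomial.toLaurent b).coeff m = 0 := by
    intro m
    rw [← Finsupp.add_apply, ← AddMonoidAlgebra.coeff_add, h, AddMonoidAlgebra.coeff_zero,
      Finsupp.coe_zero, Pi.zero_apply]
  have ha : ∀ n : ℕ, a.coeff (n + 1) = 0 := by
    intro n
    have := hm (-(n + 1 : ℕ) : ℤ)
    rw [Susp.ev_coeff, Susp.toLaurent_coeff] at this
    simp only [neg_neg, Int.toNat_natCast] at this
    rw [if_pos (by omega), if_neg (by omega), add_zero] at this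
    rcases mul_eq_zero.mp this with h' | h'
    · exact h'
    · exact absurd h' (pow_ne_zero _ hf)
  have hb : ∀ n : ℕ, b.coeff (n + 1) = 0 := by
    intro n
    have := hm ((n + 1 : ℕ) : ℤ)
    rw [Susp.ev_coeff, Susp.toLaurent_coeff] at this
    rw [if_neg (by omega), if_pos (by omega), zero_add, Int.toNat_natCast] at this
    exact this
  have h0 : a.coeff 0 + b.coeff 0 = 0 := by
    have := hm 0
    rw [Susp.ev_coeff, Susp.toLaurent_coeff, if_pos le_rfl, if_pos le_rfl] at this
    simpa using this
  have haC : a = Polynomial.C (a.coeff 0) := by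
    ext n
    cases n with
    | zero => simp
    | succ n => simp [ha n, Polynomial.coeff_C]
  have hbC : b = Polynomial.C (b.coeff 0) := by
    ext n
    cases n with
    | zero => simp
    | succ n => simp [hb n, Polynomial.coeff_C]
  rw [haC, hbC, Polynomial.aeval_C, Polynomial.aeval_C, MvPolynomial.algebraMap_eq,
    ← map_add, h0, map_zero]

private lemma Susp.pi_ker_le [IsDomain R] {f : R} (hf : f ≠ 0) {p : MvPolynomial (Fin 2) R}
    (hp : Susp.pi f p = 0) :
    p ∈ Ideal.span {(X 0 * X 1 - MvPolynomial.C f : MvPolynomial (Fin 2) R)} := by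
  obtain ⟨a, b, hab⟩ := Susp.nf_exists f p
  obtain ⟨c, hc⟩ := Ideal.mem_span_singleton.mp hab
  have h0 : Susp.pi f (Polynomial.aeval (X 0) a + Polynomial.aeval (X 1) b) = 0 := by
    have h1 : Susp.pi f (p - (Polynomial.aeval (X 0) a + Polynomial.aeval (X 1) b)) = 0 := by
      rw [hc, map_mul, Susp.pi_rel, zero_mul]
    rw [map_sub, hp, zero_sub, neg_eq_zero] at h1
    exact h1
  have := Susp.nf_inj hf a b h0
  rw [this, sub_zero] at hab
  exact hab

/-- The induced embedding `S → R[T,T⁻¹]`. -/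
noncomputable def Susp.emb (f : R) : Susp R f →ₐ[R] R[T;T⁻¹] :=
  Ideal.Quotient.liftₐ _ (Susp.pi f) (by
    intro a ha
    obtain ⟨c, rfl⟩ := Ideal.mem_span_singleton.mp ha
    rw [map_mul, Susp.pi_rel, zero_mul])

private lemma Susp.emb_mk (f : R) (p : MvPolynomial (Fin 2) R) :
    Susp.emb f (Ideal.Quotient.mk _ p) = Susp.pi f p := rfl

private lemma Susp.emb_injective [IsDomain R] {f : R} (hf : f ≠ 0) :
    Function.Injective (Susp.emb f) := by
  rw [injective_iff_map_eq_zero]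
  intro x hx
  obtain ⟨p, rfl⟩ := Ideal.Quotient.mk_surjective x
  rw [Susp.emb_mk] at hx
  rw [Ideal.Quotient.eq_zero_iff_mem]
  exact Susp.pi_ker_le hf hx

private lemma Susp.isDomain [IsDomain R] {f : R} (hf : f ≠ 0) : IsDomain (Susp R f) := by
  haveI : IsDomain (R[T;T⁻¹]) := NoZeroDivisors.to_isDomain _
  exact (Susp.emb_injective hf).isDomain (Susp.emb f).toRingHom

end SuspAux

/-- Let `R` be an integrally closed domain, `f ∈ R` nonzero, and
`S = R[u,v]/(uv - f)`. If `φ ∈ Frac(S)` can be written as `g / u^d` with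
`g ∈ R[u] ⊆ S` and as `h / v^d` with `h ∈ R[v] ⊆ S`, then `φ ∈ S`. -/
theorem mem_suspension_of_fractions (R : Type*) [CommRing R] [IsDomain R]
    [IsIntegrallyClosed R] (f : R) (hf0 : f ≠ 0)
    (φ : FractionRing (Susp R f)) (d : ℕ) (g h : Susp R f)
    (hg : g ∈ Algebra.adjoin R {suspU R f})
    (hh : h ∈ Algebra.adjoin R {suspV R f})
    (hgu : φ * algebraMap (Susp R f) (FractionRing (Susp R f)) ((suspU R f) ^ d) =
      algebraMap (Susp R f) (FractionRing (Susp R f)) g)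
    (hhv : φ * algebraMap (Susp R f) (FractionRing (Susp R f)) ((suspV R f) ^ d) =
      algebraMap (Susp R f) (FractionRing (Susp R f)) h) :
    φ ∈ (algebraMap (Susp R f) (FractionRing (Susp R f))).range := by
  classical
  open LaurentPolynomial Polynomial in
  haveI : IsDomain (Susp R f) := Susp.isDomain hf0
  set ι := algebraMap (Susp R f) (FractionRing (Susp R f)) with hι
  have hinj : Function.Injective ι := IsFractionRing.injective _ _
  rw [Algebra.adjoin_singleton_eq_range_aeval] at hg hh
  obtain ⟨G, (hG : Polynomial.aeval (suspU R f) G = g)⟩ := hg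
  obtain ⟨H, (hH : Polynomial.aeval (suspV R f) H = h)⟩ := hh
  -- values of the embedding
  have hψu : Susp.emb f (suspU R f) = LaurentPolynomial.C f * T (-1) := by
    rw [Susp.emb_mk, Susp.pi_X0]
  have hψv : Susp.emb f (suspV R f) = T 1 := by
    rw [Susp.emb_mk, Susp.pi_X1]
  have hψalg : ∀ r : R, Susp.emb f (algebraMap R (Susp R f) r) = LaurentPolynomial.C r := by
    intro r
    rw [AlgHom.commutes]
    rfl
  have hψg : Susp.emb f g = Polynomial.aeval (LaurentPolynomial.C f * T (-1)) G := by
    rw [← hG, ← Polynomial.aeval_algHom_apply, hψu]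
  have hψh : Susp.emb f h = Polynomial.toLaurent H := by
    rw [← hH, ← Polynomial.aeval_algHom_apply, hψv, Susp.aeval_T_one]
  -- the key relation in S
  have key : g * suspV R f ^ d = h * suspU R f ^ d := by
    apply hinj
    rw [map_mul, map_mul, map_pow, map_pow, ← hgu, ← hhv, map_pow, map_pow]
    ring
  -- its coefficientwise consequence in the Laurent ring
  have lkey : ∀ m : ℤ,
      (Polynomial.aeval (LaurentPolynomial.C f * T (-1)) G : R[T;T⁻¹]).coeff (m - d)
        = f ^ d * (Polynomial.toLaurent H).coeff (m + d) := by
    intro m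
    have hl := congrArg (Susp.emb f) key
    rw [map_mul, map_mul, map_pow, map_pow, hψg, hψh, hψu, hψv, T_pow, mul_one,
      mul_pow, ← map_pow, T_pow] at hl
    have h2 : (Polynomial.aeval (LaurentPolynomial.C f * T (-1)) G * T d : R[T;T⁻¹]).coeff m
        = (Polynomial.toLaurent H * (LaurentPolynomial.C (f ^ d) * T (↑d * -1)) : R[T;T⁻¹]).coeff m := by
      rw [hl]
    rw [Susp.mulT_apply] at h2
    rw [mul_left_comm, Susp.Cmul_apply, Susp.mulT_apply] at h2
    rw [h2]
    congr 2
    omega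
  -- the element of S equal to φ
  set s : Susp R f := Polynomial.aeval (suspU R f) (Polynomial.divX^[d] G)
      + Polynomial.aeval (suspV R f) (Polynomial.divX^[d] H)
      - algebraMap R (Susp R f) (H.coeff d) with hs
  have hψs0 : Susp.emb f (Polynomial.aeval (suspU R f) (Polynomial.divX^[d] G))
      = Polynomial.aeval (LaurentPolynomial.C f * T (-1)) (Polynomial.divX^[d] G) := by
    rw [← Polynomial.aeval_algHom_apply, hψu]
  have hψs1 : Susp.emb f (Polynomial.aeval (suspV R f) (Polynomial.divX^[d] H))
      = Polynomial.toLaurent (Polynomial.divX^[d] H) := by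
    rw [← Polynomial.aeval_algHom_apply, hψv, Susp.aeval_T_one]
  -- the main identity in S
  have hmain : algebraMap R (Susp R f) f ^ d * s = g * suspV R f ^ d := by
    apply Susp.emb_injective hf0
    rw [map_mul, map_pow, hψalg, hs, map_sub, map_add, hψs0, hψs1, hψalg,
      map_mul, map_pow, hψg, hψv, T_pow, mul_one, ← map_pow]
    refine AddMonoidAlgebra.ext (Finsupp.ext fun m => ?_)
    rw [Susp.mulT_apply, Susp.Cmul_apply, AddMonoidAlgebra.coeff_sub, Finsupp.sub_apply,
      AddMonoidAlgebra.coeff_add, Finsupp.add_apply]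
    rcases lt_trichotomy m 0 with hm | hm | hm
    · -- m < 0
      rw [Susp.ev_coeff, Susp.toLaurent_coeff, Susp.ev_coeff,
        if_pos (by omega : m ≤ 0), if_neg (by omega : ¬ (0:ℤ) ≤ m),
        if_pos (by omega : m - d ≤ 0),
        show (LaurentPolynomial.C (H.coeff d) : R[T;T⁻¹]).coeff m = 0 from by
          rw [LaurentPolynomial.C_apply, if_neg (by omega)],
        Susp.divX_iterate_coeff,
        show (-(m - (d:ℤ))).toNat = (-m).toNat + d from by omega,
        pow_add]
      ring
    · -- m = 0
      subst hm
      rw [Susp.ev_coeff, Susp.toLaurent_coeff, Susp.ev_coeff,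
        if_pos le_rfl, if_pos le_rfl, if_pos (by omega : (0:ℤ) - d ≤ 0),
        LaurentPolynomial.C_apply, if_pos rfl,
        Susp.divX_iterate_coeff, Susp.divX_iterate_coeff]
      simp only [neg_zero, Int.toNat_zero, zero_add, pow_zero, mul_one, zero_sub, neg_neg,
        Int.toNat_natCast]
      ring
    · -- m > 0
      rw [lkey m, Susp.ev_coeff, Susp.toLaurent_coeff, Susp.toLaurent_coeff,
        if_neg (by omega : ¬ m ≤ 0), if_pos (by omega : (0:ℤ) ≤ m),
        if_pos (by omega : (0:ℤ) ≤ m + d),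
        show (LaurentPolynomial.C (H.coeff d) : R[T;T⁻¹]).coeff m = 0 from by
          rw [LaurentPolynomial.C_apply, if_neg (by omega)],
        Susp.divX_iterate_coeff,
        show (m + (d:ℤ)).toNat = m.toNat + d from by omega]
      ring
  -- conclude
  refine ⟨s, ?_⟩
  have huv : suspU R f * suspV R f = algebraMap R (Susp R f) f := by
    rw [show algebraMap R (Susp R f) f
        = Ideal.Quotient.mk _ (MvPolynomial.C f : MvPolynomial (Fin 2) R) from rfl,
      ← map_mul]
    rw [Ideal.Quotient.mk_eq_mk_iff_sub_mem]
    exact Ideal.mem_span_singleton_self _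
  have hfS : algebraMap R (Susp R f) f ≠ 0 := by
    intro h0
    apply hf0
    have := congrArg (Susp.emb f) h0
    rw [hψalg, map_zero, ← LaurentPolynomial.single_eq_C] at this
    exact AddMonoidAlgebra.single_eq_zero.mp this
  have hcancel : ι (algebraMap R (Susp R f) f ^ d) ≠ 0 := by
    intro h0
    exact pow_ne_zero d hfS (hinj (by rw [h0, map_zero]))
  apply mul_right_cancel₀ hcancel
  calc ι s * ι (algebraMap R (Susp R f) f ^ d)
      = ι (algebraMap R (Susp R f) f ^ d * s) := by rw [map_mul]; exact mul_comm _ _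
    _ = ι (g * suspV R f ^ d) := by rw [hmain]
    _ = ι g * ι (suspV R f ^ d) := by rw [map_mul]
    _ = φ * ι (suspU R f ^ d) * ι (suspV R f ^ d) := by rw [hgu]
    _ = φ * ι ((suspU R f * suspV R f) ^ d) := by
        rw [mul_pow, map_mul, mul_assoc]
    _ = φ * ι (algebraMap R (Susp R f) f ^ d) := by rw [huv]
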